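/- (Kotecky–Preiss style induction bound) Let φ : {finite subsets of ℤ^d} → [0,∞) be translation-invariant-bounded in the sense that sup_x Σ_{B ∋ x} φ(B) e^{a|B|} ≤ a for some a > 0. Define, for a finite collection Δ of finite sets and B ∈ Δ, Y(Δ|B) = Σ_{l≥1} Σ over subsets {B_1,…,B_l} ⊂ Δ containing B with connected intersection graph of ∏_i φ(B_i). Then sup_x Σ_{B∋x, B∈Δ} Y(Δ|B) ≤ a, uniformly in the finite collection Δ. -/

import Mathlib

open scoped Classical ENNReal

/-- A finite collection of finite sets is connected if its intersection graph (edge iff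
nonempty intersection) is connected. -/
def FamConnected {ι : Type} [DecidableEq ι] (S : Finset (Finset ι)) : Prop :=
  (SimpleGraph.fromRel (fun A B : S => (A.1 ∩ B.1).Nonempty)).Connected

section KP

variable {ι : Type} [DecidableEq ι]

def kpStep (T : Finset (Finset ι)) (E E' : Finset ι) : Prop := E' ∈ T ∧ (E ∩ E').Nonempty

def kpRel (T : Finset (Finset ι)) : Finset ι → Finset ι → Prop := Relation.ReflTransGen (kpStep T)

noncomputable def kpComp (T : Finset (Finset ι)) (D : Finset ι) : Finset (Finset ι) :=
  T.filter (kpRel T D)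



lemma kpRel.mem_or_eq {T : Finset (Finset ι)} {D E : Finset ι} (h : kpRel T D E) :
    E ∈ T ∨ E = D := by
  induction h with
  | refl => exact Or.inr rfl
  | tail _ hstep _ => exact Or.inl hstep.1

lemma kpRel.symm {T : Finset (Finset ι)} {D E : Finset ι} (hD : D ∈ T) (h : kpRel T D E) :
    kpRel T E D := by
  induction h with
  | refl => exact Relation.ReflTransGen.refl
  | @tail E E' hDE hstep ih =>
      have hE : E ∈ T := by
        rcases kpRel.mem_or_eq hDE with h | h
        · exact h
        · exact h ▸ hD
      exact Relation.ReflTransGen.head ⟨hE, by rw [Finset.inter_comm]; exact hstep.2⟩ ih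

lemma kpRel.trans {T : Finset (Finset ι)} {D E F : Finset ι} (h1 : kpRel T D E)
    (h2 : kpRel T E F) : kpRel T D F := Relation.ReflTransGen.trans h1 h2

lemma mem_kpComp_self {T : Finset (Finset ι)} {D : Finset ι} (hD : D ∈ T) : D ∈ kpComp T D :=
  Finset.mem_filter.mpr ⟨hD, Relation.ReflTransGen.refl⟩

lemma kpComp_subset {T : Finset (Finset ι)} {D : Finset ι} : kpComp T D ⊆ T :=
  Finset.filter_subset _ _

lemma kpComp_eq_of_mem {T : Finset (Finset ι)} {D E : Finset ι} (hD : D ∈ T)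
    (hE : E ∈ kpComp T D) : kpComp T E = kpComp T D := by
  obtain ⟨hEm, hrel⟩ := Finset.mem_filter.mp hE
  ext X
  simp only [kpComp, Finset.mem_filter]
  constructor
  · rintro ⟨hX, hr⟩; exact ⟨hX, kpRel.trans hrel hr⟩
  · rintro ⟨hX, hr⟩; exact ⟨hX, kpRel.trans (kpRel.symm hD hrel) hr⟩


/-- components are connected families -/
lemma kpComp_famConnected {T : Finset (Finset ι)} {D : Finset ι} (hD : D ∈ T) :
    FamConnected (kpComp T D) := by
  set c := kpComp T D with hc
  have hDc : D ∈ c := mem_kpComp_self hD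
  -- reachability to D for all E with kpRel T D E
  have key : ∀ E (h : kpRel T D E), ∃ hE : E ∈ c,
      (SimpleGraph.fromRel (fun A B : c => (A.1 ∩ B.1).Nonempty)).Reachable ⟨D, hDc⟩ ⟨E, hE⟩ := by
    intro E h
    induction h with
    | refl => exact ⟨hDc, SimpleGraph.Reachable.refl _⟩
    | @tail E E' hDE hstep ih =>
        obtain ⟨hEc, hreach⟩ := ih
        have hE'c : E' ∈ c := Finset.mem_filter.mpr ⟨hstep.1, Relation.ReflTransGen.tail hDE hstep⟩
        refine ⟨hE'c, ?_⟩
        by_cases heq : E = E'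
        · subst heq; exact hreach
        · refine hreach.trans (SimpleGraph.Adj.reachable ?_)
          exact SimpleGraph.fromRel_adj .. |>.mpr ⟨by simpa using heq, Or.inl hstep.2⟩
  rw [FamConnected]
  haveI : Nonempty {x // x ∈ c} := ⟨⟨D, hDc⟩⟩
  constructor
  intro u v
  obtain ⟨hu, hru⟩ := key u.1 (Finset.mem_filter.mp u.2).2
  obtain ⟨hv, hrv⟩ := key v.1 (Finset.mem_filter.mp v.2).2
  have h1 : (⟨u.1, hu⟩ : c) = u := Subtype.ext rfl
  rw [h1] at hru
  have h2 : (⟨v.1, hv⟩ : c) = v := Subtype.ext rfl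
  rw [h2] at hrv
  exact hru.symm.trans hrv

/-- Each component of S \ {B} touches B when S is connected. -/
lemma kpComp_touches {S : Finset (Finset ι)} {B : Finset ι} (hB : B ∈ S)
    (hconn : FamConnected S) {D : Finset ι} (hD : D ∈ S.erase B) :
    ∃ D' ∈ kpComp (S.erase B) D, (D' ∩ B).Nonempty := by
  classical
  set T := S.erase B with hT
  have hDS : D ∈ S := Finset.mem_of_mem_erase hD
  have hDB : D ≠ B := Finset.ne_of_mem_erase hD
  obtain ⟨p⟩ := hconn.preconnected ⟨D, hDS⟩ ⟨B, hB⟩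
  -- generalize the start point
  have main : ∀ (u v : S) (p : (SimpleGraph.fromRel (fun A B : S => (A.1 ∩ B.1).Nonempty)).Walk u v),
      v.1 = B → u.1 ≠ B → ∃ D', kpRel T u.1 D' ∧ (D' ∩ B).Nonempty := by
    intro u v p
    induction p with
    | nil => intro hvB hu; exact absurd hvB hu
    | @cons u v w hadj q ih =>
        intro hwB hu
        have hint : (u.1 ∩ v.1).Nonempty := by
          rw [SimpleGraph.fromRel_adj] at hadj
          rcases hadj.2 with h | h
          · exact h
          · rw [Finset.inter_comm]; exact h
        by_cases hv : v.1 = B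
        · exact ⟨u.1, Relation.ReflTransGen.refl, by rw [← hv]; exact hint⟩
        · obtain ⟨D', hrel, hD'⟩ := ih hwB hv
          have hvT : v.1 ∈ T := Finset.mem_erase.mpr ⟨hv, v.2⟩
          exact ⟨D', Relation.ReflTransGen.head ⟨hvT, hint⟩ hrel, hD'⟩
  obtain ⟨D', hrel, hD'⟩ := main ⟨D, hDS⟩ ⟨B, hB⟩ p rfl hDB
  have hD'T : D' ∈ T := by
    rcases kpRel.mem_or_eq hrel with h | h
    · exact h
    · exact h ▸ hD
  exact ⟨D', Finset.mem_filter.mpr ⟨hD'T, hrel⟩, hD'⟩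


lemma kpComp_biUnion (T : Finset (Finset ι)) :
    (T.image (fun D => kpComp T D)).biUnion id = T := by
  ext E
  simp only [Finset.mem_biUnion, Finset.mem_image, id]
  constructor
  · rintro ⟨c, ⟨D, hD, rfl⟩, hE⟩; exact kpComp_subset hE
  · intro hE; exact ⟨kpComp T E, ⟨E, hE, rfl⟩, mem_kpComp_self hE⟩

lemma kpComp_pairwiseDisjoint (T : Finset (Finset ι)) :
    Set.PairwiseDisjoint ↑(T.image (fun D => kpComp T D)) (id : Finset (Finset ι) → _) := by
  rintro c₁ h₁ c₂ h₂ hne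
  simp only [Finset.coe_image, Set.mem_image, Finset.mem_coe] at h₁ h₂
  obtain ⟨D₁, hD₁, rfl⟩ := h₁
  obtain ⟨D₂, hD₂, rfl⟩ := h₂
  simp only [id, Finset.disjoint_left]
  intro E hE₁ hE₂
  exact hne ((kpComp_eq_of_mem hD₁ hE₁).symm.trans (kpComp_eq_of_mem hD₂ hE₂))

/-- decomposition of the product over `S` into `B` and components of `S.erase B` -/
lemma prod_decomp (φ : Finset ι → ℝ≥0∞) {S : Finset (Finset ι)} {B : Finset ι} (hB : B ∈ S) :
    ∏ D ∈ S, φ D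
      = φ B * ∏ c ∈ (S.erase B).image (fun D => kpComp (S.erase B) D), ∏ D ∈ c, φ D := by
  set T := S.erase B with hT
  have h1 : S = insert B T := by rw [hT, Finset.insert_erase hB]
  calc ∏ D ∈ S, φ D = φ B * ∏ D ∈ T, φ D := by
        rw [h1, Finset.prod_insert (by rw [hT]; exact Finset.notMem_erase B S)]
    _ = φ B * ∏ D ∈ (T.image (fun D => kpComp T D)).biUnion id, φ D := by
        rw [kpComp_biUnion]
    _ = φ B * ∏ c ∈ T.image (fun D => kpComp T D), ∏ D ∈ id c, φ D := by
        rw [Finset.prod_biUnion (kpComp_pairwiseDisjoint T)]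
    _ = φ B * ∏ c ∈ T.image (fun D => kpComp T D), ∏ D ∈ c, φ D := by simp only [id]

/-- sum over a set covered by a family is at most the double sum -/
lemma sum_le_sigma_sum {α β : Type*} (s : Finset α) (t : Finset β) (T : β → Finset α)
    (w : α → ℝ≥0∞) (h : ∀ c ∈ s, ∃ b ∈ t, c ∈ T b) :
    ∑ c ∈ s, w c ≤ ∑ b ∈ t, ∑ c ∈ T b, w c := by
  rcases s.eq_empty_or_nonempty with rfl | ⟨c₀, hc₀⟩
  · simp
  obtain ⟨b₀, -, -⟩ := h c₀ hc₀
  set pick : α → β := fun c => if hc : ∃ b ∈ t, c ∈ T b then hc.choose else b₀ with hpick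
  have hpickP : ∀ c ∈ s, pick c ∈ t ∧ c ∈ T (pick c) := by
    intro c hc
    have hex := h c hc
    simp only [hpick, dif_pos hex]
    exact ⟨hex.choose_spec.1, hex.choose_spec.2⟩
  have key : ∑ c ∈ s, w c
      = ∑ p ∈ s.image (fun c => (⟨pick c, c⟩ : Σ _ : β, α)), w p.2 := by
    rw [Finset.sum_image]
    intro c₁ _ c₂ _ hEq
    exact (Sigma.mk.inj_iff.mp hEq).2.eq
  rw [key, ← Finset.sum_sigma t T (fun p => w p.2)]
  apply Finset.sum_le_sum_of_subset
  intro p hp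
  simp only [Finset.mem_image] at hp
  obtain ⟨c, hc, rfl⟩ := hp
  obtain ⟨h1, h2⟩ := hpickP c hc
  exact Finset.mem_sigma.mpr ⟨h1, h2⟩

/-- sum over powerset of products bounded by exponential -/
lemma powerset_sum_le_exp {α : Type*} (s : Finset α) (w : α → ℝ≥0∞) (r : ℝ) (hr : 0 ≤ r)
    (h : ∑ c ∈ s, w c ≤ ENNReal.ofReal r) :
    ∑ U ∈ s.powerset, ∏ c ∈ U, w c ≤ ENNReal.ofReal (Real.exp r) := by
  have hfin : ∀ c ∈ s, w c ≠ ∞ := by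
    intro c hc
    exact ne_top_of_le_ne_top ENNReal.ofReal_ne_top
      ((Finset.single_le_sum (fun _ _ => zero_le) hc).trans h)
  have h1 : ∑ U ∈ s.powerset, ∏ c ∈ U, w c = ∏ c ∈ s, (w c + 1) := by
    rw [Finset.prod_add]
    simp
  rw [h1]
  have hsum : ∑ c ∈ s, (w c).toReal ≤ r := by
    have := ENNReal.toReal_sum hfin (s := s) (f := w)  -- check exact form
    calc ∑ c ∈ s, (w c).toReal = (∑ c ∈ s, w c).toReal := this.symm
      _ ≤ r := ENNReal.toReal_le_of_le_ofReal hr h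
  calc ∏ c ∈ s, (w c + 1) ≤ ∏ c ∈ s, ENNReal.ofReal (Real.exp (w c).toReal) := by
        apply Finset.prod_le_prod'
        intro c hc
        calc w c + 1 = ENNReal.ofReal ((w c).toReal + 1) := by
              rw [ENNReal.ofReal_add ENNReal.toReal_nonneg zero_le_one,
                ENNReal.ofReal_toReal (hfin c hc), ENNReal.ofReal_one]
          _ ≤ ENNReal.ofReal (Real.exp (w c).toReal) :=
              ENNReal.ofReal_le_ofReal (Real.add_one_le_exp _)
    _ = ENNReal.ofReal (∏ c ∈ s, Real.exp (w c).toReal) :=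
        (ENNReal.ofReal_prod_of_nonneg (fun c _ => (Real.exp_pos _).le)).symm
    _ = ENNReal.ofReal (Real.exp (∑ c ∈ s, (w c).toReal)) := by rw [Real.exp_sum]
    _ ≤ ENNReal.ofReal (Real.exp r) :=
        ENNReal.ofReal_le_ofReal (Real.exp_le_exp.mpr hsum)


noncomputable def Ydef (φ : Finset ι → ℝ≥0∞) (Δ : Finset (Finset ι)) (B : Finset ι) : ℝ≥0∞ :=
  ∑ S ∈ Δ.powerset.filter (fun S => B ∈ S ∧ FamConnected S), ∏ B' ∈ S, φ B'

lemma kp_key (φ : Finset ι → ℝ≥0∞) (a : ℝ) (ha : 0 < a) (Δ : Finset (Finset ι))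
    (B : Finset ι) (_hB : B ∈ Δ)
    (IH : ∀ x : ι, ∑ D ∈ (Δ.erase B).filter (fun D => x ∈ D), Ydef φ (Δ.erase B) D
        ≤ ENNReal.ofReal a) :
    Ydef φ Δ B ≤ φ B * ENNReal.ofReal (Real.exp (a * B.card)) := by
  set Δ' := Δ.erase B with hΔ'
  set w : Finset (Finset ι) → ℝ≥0∞ := fun c => ∏ D ∈ c, φ D with hw
  set C := Δ'.powerset.filter (fun c => FamConnected c ∧ ∃ D ∈ c, (D ∩ B).Nonempty) with hC
  set dom := Δ.powerset.filter (fun S => B ∈ S ∧ FamConnected S) with hdom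
  set F : Finset (Finset ι) → Finset (Finset (Finset ι)) :=
    fun S => (S.erase B).image (fun D => kpComp (S.erase B) D) with hF
  have hdomP : ∀ S ∈ dom, S ⊆ Δ ∧ B ∈ S ∧ FamConnected S := by
    intro S hS
    obtain ⟨h1, h2, h3⟩ := Finset.mem_filter.mp hS
    exact ⟨Finset.mem_powerset.mp h1, h2, h3⟩
  have step1 : Ydef φ Δ B ≤ φ B * ∑ U ∈ C.powerset, ∏ c ∈ U, w c := by
    have hFmem : ∀ S ∈ dom, F S ∈ C.powerset := by
      intro S hS
      obtain ⟨hSΔ, hBS, hconn⟩ := hdomP S hS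
      rw [Finset.mem_powerset]
      intro c hc
      simp only [hF, Finset.mem_image] at hc
      obtain ⟨D, hD, rfl⟩ := hc
      rw [hC, Finset.mem_filter, Finset.mem_powerset]
      refine ⟨?_, kpComp_famConnected hD, ?_⟩
      · exact (kpComp_subset).trans (Finset.erase_subset_erase B hSΔ)
      · exact kpComp_touches hBS hconn hD
    have hFinj : ∀ S₁ ∈ dom, ∀ S₂ ∈ dom, F S₁ = F S₂ → S₁ = S₂ := by
      intro S₁ h₁ S₂ h₂ hEq
      have e1 : (F S₁).biUnion id = S₁.erase B := kpComp_biUnion _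
      have e2 : (F S₂).biUnion id = S₂.erase B := kpComp_biUnion _
      have : S₁.erase B = S₂.erase B := by rw [← e1, ← e2, hEq]
      rw [← Finset.insert_erase (hdomP S₁ h₁).2.1, ← Finset.insert_erase (hdomP S₂ h₂).2.1, this]
    calc Ydef φ Δ B = ∑ S ∈ dom, φ B * ∏ c ∈ F S, w c := by
          rw [Ydef]
          exact Finset.sum_congr rfl (fun S hS => prod_decomp φ (hdomP S hS).2.1)
      _ = ∑ U ∈ dom.image F, φ B * ∏ c ∈ U, w c := (Finset.sum_image (g := F) (f := fun U => φ B * ∏ c ∈ U, w c) hFinj).symm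
      _ ≤ ∑ U ∈ C.powerset, φ B * ∏ c ∈ U, w c := by
          apply Finset.sum_le_sum_of_subset
          intro U hU
          obtain ⟨S, hS, rfl⟩ := Finset.mem_image.mp hU
          exact hFmem S hS
      _ = φ B * ∑ U ∈ C.powerset, ∏ c ∈ U, w c := by rw [Finset.mul_sum]
  have step2 : ∑ c ∈ C, w c ≤ ENNReal.ofReal (a * B.card) := by
    have h1 : ∑ c ∈ C, w c
        ≤ ∑ x ∈ B, ∑ c ∈ C.filter (fun c => ∃ D ∈ c, x ∈ D), w c := by
      apply sum_le_sigma_sum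
      intro c hc
      obtain ⟨-, -, D', hD', hint⟩ := Finset.mem_filter.mp hc
      obtain ⟨x, hx⟩ := hint
      obtain ⟨hxD, hxB⟩ := Finset.mem_inter.mp hx
      exact ⟨x, hxB, Finset.mem_filter.mpr ⟨hc, D', hD', hxD⟩⟩
    have h2 : ∀ x ∈ B, ∑ c ∈ C.filter (fun c => ∃ D ∈ c, x ∈ D), w c ≤ ENNReal.ofReal a := by
      intro x _
      have hcover : ∀ c ∈ C.filter (fun c => ∃ D ∈ c, x ∈ D),
          ∃ D ∈ Δ'.filter (fun D => x ∈ D),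
            c ∈ Δ'.powerset.filter (fun S => D ∈ S ∧ FamConnected S) := by
        intro c hc
        obtain ⟨hcC, D, hDc, hxD⟩ := Finset.mem_filter.mp hc
        obtain ⟨hcp, hconn, -⟩ := Finset.mem_filter.mp hcC
        have hcΔ' : c ⊆ Δ' := Finset.mem_powerset.mp hcp
        exact ⟨D, Finset.mem_filter.mpr ⟨hcΔ' hDc, hxD⟩,
          Finset.mem_filter.mpr ⟨hcp, hDc, hconn⟩⟩
      refine (sum_le_sigma_sum _ _ _ w hcover).trans ?_
      refine le_trans (le_of_eq ?_) (IH x)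
      exact Finset.sum_congr rfl (fun D _ => rfl)
    calc ∑ c ∈ C, w c ≤ ∑ x ∈ B, ∑ c ∈ C.filter (fun c => ∃ D ∈ c, x ∈ D), w c := h1
      _ ≤ ∑ _x ∈ B, ENNReal.ofReal a := Finset.sum_le_sum h2
      _ = B.card • ENNReal.ofReal a := Finset.sum_const _
      _ = ENNReal.ofReal (a * B.card) := by
          rw [nsmul_eq_mul, ← ENNReal.ofReal_natCast B.card,
            ← ENNReal.ofReal_mul (Nat.cast_nonneg _), mul_comm]
  have step3 := powerset_sum_le_exp C w (a * B.card) (by positivity) step2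
  exact step1.trans (mul_le_mul_right step3 _)

end KP

/-- Kotecky–Preiss style induction bound: if `sup_x Σ_{B∋x} φ(B) e^{a|B|} ≤ a`, then with
`Y(Δ|B) = Σ over connected subcollections of Δ containing B of ∏ φ`, one has
`sup_x Σ_{B∋x, B∈Δ} Y(Δ|B) ≤ a` uniformly in the finite collection `Δ`. -/
theorem stmt16 {d : ℕ} (a : ℝ) (ha : 0 < a)
    (φ : Finset (Fin d → ℤ) → ℝ≥0∞)
    (hφ : ∀ x : Fin d → ℤ,
      ∑' B : {B : Finset (Fin d → ℤ) // x ∈ B},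
          φ B.1 * ENNReal.ofReal (Real.exp (a * B.1.card)) ≤ ENNReal.ofReal a)
    (Y : Finset (Finset (Fin d → ℤ)) → Finset (Fin d → ℤ) → ℝ≥0∞)
    (hY : ∀ Δ B, Y Δ B =
      ∑ S ∈ Δ.powerset.filter (fun S => B ∈ S ∧ FamConnected S), ∏ B' ∈ S, φ B') :
    ∀ (Δ : Finset (Finset (Fin d → ℤ))) (x : Fin d → ℤ),
      ∑ B ∈ Δ.filter (fun B => x ∈ B), Y Δ B ≤ ENNReal.ofReal a := by
  have hYd : ∀ Δ B, Y Δ B = Ydef φ Δ B := by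
    intro Δ B
    rw [hY, Ydef]
  suffices main : ∀ (n : ℕ) (Δ : Finset (Finset (Fin d → ℤ))), Δ.card ≤ n →
      ∀ x : Fin d → ℤ,
        ∑ B ∈ Δ.filter (fun B => x ∈ B), Ydef φ Δ B ≤ ENNReal.ofReal a by
    intro Δ x
    calc ∑ B ∈ Δ.filter (fun B => x ∈ B), Y Δ B
        = ∑ B ∈ Δ.filter (fun B => x ∈ B), Ydef φ Δ B :=
          Finset.sum_congr rfl (fun B _ => hYd Δ B)
      _ ≤ ENNReal.ofReal a := main Δ.card Δ le_rfl x
  intro n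
  induction n with
  | zero =>
      intro Δ hΔ x
      rw [Finset.card_eq_zero.mp (Nat.le_zero.mp hΔ)]
      simp
  | succ n ih =>
      intro Δ hΔ x
      have hterm : ∀ B ∈ Δ.filter (fun B => x ∈ B),
          Ydef φ Δ B ≤ φ B * ENNReal.ofReal (Real.exp (a * B.card)) := by
        intro B hBf
        have hB : B ∈ Δ := (Finset.mem_filter.mp hBf).1
        apply kp_key φ a ha Δ B hB
        intro y
        apply ih (Δ.erase B) ?_ y
        have h1 : (Δ.erase B).card < Δ.card := Finset.card_erase_lt_of_mem hB
        omega
      set s : Finset {B : Finset (Fin d → ℤ) // x ∈ B} :=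
        (Δ.filter (fun B => x ∈ B)).attach.map
          ⟨fun B => ⟨B.1, by
              have h := B.2
              rw [Finset.mem_filter] at h
              exact h.2⟩,
            by
              intro p q h
              apply Subtype.ext
              simpa using congrArg Subtype.val h⟩ with hs
      calc ∑ B ∈ Δ.filter (fun B => x ∈ B), Ydef φ Δ B
          ≤ ∑ B ∈ Δ.filter (fun B => x ∈ B), φ B * ENNReal.ofReal (Real.exp (a * B.card)) :=
            Finset.sum_le_sum hterm
        _ = ∑ b ∈ s, φ b.1 * ENNReal.ofReal (Real.exp (a * b.1.card)) := by
            rw [hs, Finset.sum_map,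
              ← Finset.sum_attach (Δ.filter (fun B => x ∈ B))
                (fun B => φ B * ENNReal.ofReal (Real.exp (a * B.card)))]
            rfl
        _ ≤ ∑' B : {B : Finset (Fin d → ℤ) // x ∈ B},
              φ B.1 * ENNReal.ofReal (Real.exp (a * B.1.card)) := ENNReal.sum_le_tsum s
        _ ≤ ENNReal.ofReal a := hφ x
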